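/- For any natural number n ≥ 1 and any m ≥ 1, the number of solutions x modulo n of the congruence x^m ≡ -1 (mod n) is at most 2·m^ω(n), where ω(n) is the number of distinct prime divisors of n. -/

import Mathlib

open Finset

section Aux

/-- A ring equivalence preserves the number of solutions of `x ^ m = -1`. -/
lemma aux_card_filter_ringEquiv {A B : Type*} [CommRing A] [CommRing B] [Fintype A] [Fintype B]
    [DecidableEq A] [DecidableEq B] (e : A ≃+* B) (m : ℕ) :
    (univ.filter fun x : A => x ^ m = -1).card = (univ.filter fun y : B => y ^ m = -1).card := by
  apply Finset.card_bij (fun x _ => e x)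
  · intro a ha
    simp only [mem_filter, mem_univ, true_and] at ha ⊢
    rw [← map_pow, ha, map_neg, map_one]
  · intro a _ b _ h
    exact e.injective h
  · intro b hb
    refine ⟨e.symm b, ?_, by simp⟩
    simp only [mem_filter, mem_univ, true_and] at hb ⊢
    apply e.injective
    rw [map_pow, e.apply_symm_apply, hb, map_neg, map_one]

/-- Core injectivity: if `x^r = y^r = 1` in `ZMod (p^k)` with `p ∤ r` and `x ≡ y (mod p)`,
then `x = y`. -/
lemma aux_core_inj {p : ℕ} (hp : p.Prime) {k r : ℕ} (hk : 1 ≤ k) (hr : ¬ p ∣ r)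
    {x y : ZMod (p ^ k)} (hx : x ^ r = 1) (hy : y ^ r = 1)
    (hcast : (p : ℤ) ∣ (x.val : ℤ) - (y.val : ℤ)) : x = y := by
  haveI : NeZero (p ^ k) := ⟨pow_ne_zero _ hp.pos.ne'⟩
  have hrne : r ≠ 0 := by rintro rfl; exact hr (dvd_zero p)
  have hvx : ((x.val : ℕ) : ZMod (p ^ k)) = x := ZMod.natCast_rightInverse x
  have hvy : ((y.val : ℕ) : ZMod (p ^ k)) = y := ZMod.natCast_rightInverse y
  -- divisibility facts over ℤ
  have hdx : ((p : ℤ)) ^ k ∣ (x.val : ℤ) ^ r - 1 := by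
    have : (((x.val : ℤ) ^ r - 1 : ℤ) : ZMod (p ^ k)) = 0 := by
      push_cast
      rw [hvx, hx, sub_self]
    rw [ZMod.intCast_zmod_eq_zero_iff_dvd] at this
    exact_mod_cast this
  have hdy : ((p : ℤ)) ^ k ∣ (y.val : ℤ) ^ r - 1 := by
    have : (((y.val : ℤ) ^ r - 1 : ℤ) : ZMod (p ^ k)) = 0 := by
      push_cast
      rw [hvy, hy, sub_self]
    rw [ZMod.intCast_zmod_eq_zero_iff_dvd] at this
    exact_mod_cast this
  have hpk : (p : ℤ) ∣ (p : ℤ) ^ k := dvd_pow_self _ (by omega)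
  have hndx : ¬ (p : ℤ) ∣ (x.val : ℤ) := by
    intro h
    have h1 : (p : ℤ) ∣ (x.val : ℤ) ^ r := h.trans (dvd_pow_self _ hrne)
    have h2 : (p : ℤ) ∣ (1 : ℤ) := by
      have h3 := dvd_sub h1 (hpk.trans hdx)
      simpa using h3
    have h4 := Int.le_of_dvd one_pos h2
    have h5 := hp.two_le
    omega
  by_contra hne
  have hvne : x.val ≠ y.val := fun h => hne (ZMod.val_injective _ h)
  have hd : ((p : ℤ)) ^ k ∣ (x.val : ℤ) ^ r - (y.val : ℤ) ^ r := by
    have h3 := dvd_sub hdx hdy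
    simpa using h3
  have hprime : Prime (p : ℤ) := Nat.prime_iff_prime_int.mp hp
  have hrn : ¬ (p : ℤ) ∣ (r : ℤ) := by exact_mod_cast hr
  have hlte := emultiplicity_pow_sub_pow_of_prime hprime hcast hndx hrn
  have hk1 : (k : ℕ∞) ≤ emultiplicity (p : ℤ) ((x.val : ℤ) ^ r - (y.val : ℤ) ^ r) :=
    le_emultiplicity_of_pow_dvd hd
  rw [hlte] at hk1
  have hdvd : ((p : ℤ)) ^ k ∣ (x.val : ℤ) - (y.val : ℤ) := pow_dvd_of_le_emultiplicity hk1
  have habs : |(x.val : ℤ) - (y.val : ℤ)| < (p : ℤ) ^ k := by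
    have h1 : (x.val : ℤ) < (p : ℤ) ^ k := by exact_mod_cast ZMod.val_lt x
    have h2 : (y.val : ℤ) < (p : ℤ) ^ k := by exact_mod_cast ZMod.val_lt y
    have h3 : (0 : ℤ) ≤ (x.val : ℤ) := Int.natCast_nonneg _
    have h4 : (0 : ℤ) ≤ (y.val : ℤ) := Int.natCast_nonneg _
    rw [abs_sub_lt_iff]
    omega
  have h0 := Int.eq_zero_of_abs_lt_dvd hdvd habs
  have heq : (x.val : ℤ) = (y.val : ℤ) := by omega
  exact absurd (by exact_mod_cast heq) hvne

/-- The count of `r`-torsion in `ZMod (p^k)` with `p ∤ r` is bounded by the count mod `p`. -/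
lemma aux_torsion_coprime {p : ℕ} (hp : p.Prime) {k r : ℕ} [NeZero (p ^ k)] [NeZero p]
    (hk : 1 ≤ k) (hr : ¬ p ∣ r) :
    (univ.filter fun x : ZMod (p ^ k) => x ^ r = 1).card
      ≤ (univ.filter fun y : ZMod p => y ^ r = 1).card := by
  have hdvd : p ∣ p ^ k := dvd_pow_self _ (by omega)
  apply Finset.card_le_card_of_injOn (fun x => ZMod.castHom hdvd (ZMod p) x)
  · intro x hx
    simp only [Finset.mem_coe, mem_filter, mem_univ, true_and] at hx ⊢
    rw [← map_pow, hx, map_one]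
  · intro x hx y hy h
    simp only [coe_filter, Set.mem_setOf_eq, mem_univ, true_and] at hx hy
    dsimp only at h
    have hxv : (ZMod.castHom hdvd (ZMod p)) x = ((x.val : ℕ) : ZMod p) := by
      rw [ZMod.castHom_apply, ← ZMod.natCast_val]
    have hyv : (ZMod.castHom hdvd (ZMod p)) y = ((y.val : ℕ) : ZMod p) := by
      rw [ZMod.castHom_apply, ← ZMod.natCast_val]
    rw [hxv, hyv, ZMod.natCast_eq_natCast_iff] at h
    have hdd : (p : ℤ) ∣ (x.val : ℤ) - (y.val : ℤ) := by
      have h1 := h.dvd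
      have h2 := dvd_neg.mpr h1
      rwa [neg_sub] at h2
    exact aux_core_inj hp hk hr hx hy hdd

/-- Roots of unity count in the field `ZMod p`. -/
lemma aux_field_count {p : ℕ} (hp : p.Prime) [NeZero p] {r : ℕ} (hr0 : 1 ≤ r) :
    (univ.filter fun y : ZMod p => y ^ r = 1).card ≤ r := by
  haveI : Fact p.Prime := ⟨hp⟩
  classical
  have hsub : (univ.filter fun y : ZMod p => y ^ r = 1)
      ⊆ (Polynomial.nthRoots r (1 : ZMod p)).toFinset := by
    intro y hy
    simp only [mem_filter, mem_univ, true_and] at hy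
    rw [Multiset.mem_toFinset, Polynomial.mem_nthRoots (by omega)]
    exact hy
  calc (univ.filter fun y : ZMod p => y ^ r = 1).card
      ≤ (Polynomial.nthRoots r (1 : ZMod p)).toFinset.card := Finset.card_le_card hsub
    _ ≤ Multiset.card (Polynomial.nthRoots r (1 : ZMod p)) := Multiset.toFinset_card_le _
    _ ≤ r := Polynomial.card_nthRoots r 1

/-- The `p^e`-torsion of `ZMod (p^k)` for odd `p` has at most `p^e` elements. -/
lemma aux_ptorsion {p : ℕ} (hp : p.Prime) (hodd : p ≠ 2) {k : ℕ} [NeZero (p ^ k)]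
    (hk : 1 ≤ k) (e : ℕ) :
    (univ.filter fun x : ZMod (p ^ k) => x ^ p ^ e = 1).card ≤ p ^ e := by
  haveI : Fact p.Prime := ⟨hp⟩
  haveI : NeZero p := ⟨hp.pos.ne'⟩
  rcases le_or_gt k e with hke | hek
  · calc (univ.filter fun x : ZMod (p ^ k) => x ^ p ^ e = 1).card
        ≤ p ^ k := by
          have h1 := Finset.card_filter_le (univ : Finset (ZMod (p ^ k)))
            (fun x => x ^ p ^ e = 1)
          rwa [Finset.card_univ, ZMod.card] at h1
      _ ≤ p ^ e := Nat.pow_le_pow_right hp.pos hke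
  · set M := p ^ (k - e) with hM
    have hM1 : 1 < M := Nat.one_lt_pow (by omega) hp.one_lt
    have hkey : ∀ x : ZMod (p ^ k), x ^ p ^ e = 1 → x.val % M = 1 % M := by
      intro x hx
      have hvx : ((x.val : ℕ) : ZMod (p ^ k)) = x := ZMod.natCast_rightInverse x
      have hdvd : p ∣ p ^ k := dvd_pow_self _ (by omega)
      -- x ≡ 1 mod p
      have hmodp : ((x.val : ℕ) : ZMod p) = ((1 : ℕ) : ZMod p) := by
        have h1 : (ZMod.castHom hdvd (ZMod p)) x ^ p ^ e = 1 := by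
          rw [← map_pow, hx, map_one]
        have h2 : (ZMod.castHom hdvd (ZMod p)) x ^ p ^ e = (ZMod.castHom hdvd (ZMod p)) x :=
          ZMod.pow_card_pow _
        have h3 : (ZMod.castHom hdvd (ZMod p)) x = ((x.val : ℕ) : ZMod p) := by
          rw [ZMod.castHom_apply, ← ZMod.natCast_val]
        rw [h2, h3] at h1
        simpa using h1
      rw [ZMod.natCast_eq_natCast_iff] at hmodp
      have hd1 : (p : ℤ) ∣ (x.val : ℤ) - 1 := by
        have h1 := hmodp.dvd
        have h2 := dvd_neg.mpr h1
        rwa [neg_sub] at h2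
      have hndx : ¬ (p : ℤ) ∣ (x.val : ℤ) := by
        intro h
        have h2 : (p : ℤ) ∣ (1 : ℤ) := by
          have h3 := dvd_sub h hd1
          simpa using h3
        have h4 := Int.le_of_dvd one_pos h2
        have h5 := hp.two_le
        omega
      have hdk : ((p : ℤ)) ^ k ∣ (x.val : ℤ) ^ p ^ e - 1 := by
        have : (((x.val : ℤ) ^ p ^ e - 1 : ℤ) : ZMod (p ^ k)) = 0 := by
          push_cast
          rw [hvx, hx, sub_self]
        rw [ZMod.intCast_zmod_eq_zero_iff_dvd] at this
        exact_mod_cast this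
      have hoddp : Odd p := hp.odd_of_ne_two hodd
      have hlte := Int.emultiplicity_pow_sub_pow hp hoddp
        (x := (x.val : ℤ)) (y := 1) (by simpa using hd1) hndx (p ^ e)
      have hpe : emultiplicity p (p ^ e) = (e : ℕ∞) :=
        emultiplicity_pow_self hp.pos.ne' hp.prime.not_unit e
      have hk1 : (k : ℕ∞) ≤ emultiplicity (p : ℤ) ((x.val : ℤ) ^ p ^ e - 1 ^ p ^ e) := by
        apply le_emultiplicity_of_pow_dvd
        simpa using hdk
      rw [hlte, hpe] at hk1
      have hk2 : ((k - e : ℕ) : ℕ∞) ≤ emultiplicity (p : ℤ) ((x.val : ℤ) - 1) := by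
        have h6 : ((k : ℕ∞)) - (e : ℕ∞) ≤ emultiplicity (p : ℤ) ((x.val : ℤ) - 1) :=
          tsub_le_iff_right.mpr hk1
        rwa [← ENat.coe_sub] at h6
      have hdM : ((p : ℤ)) ^ (k - e) ∣ (x.val : ℤ) - 1 := pow_dvd_of_le_emultiplicity hk2
      have hval1 : 1 ≤ x.val := by
        rcases Nat.eq_zero_or_pos x.val with h | h
        · exfalso; apply hndx; rw [h]; simp
        · exact h
      have hdMn : M ∣ x.val - 1 := by
        have h7 : ((M : ℕ) : ℤ) ∣ ((x.val - 1 : ℕ) : ℤ) := by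
          rw [hM]
          push_cast [hval1]
          exact_mod_cast hdM
        exact_mod_cast h7
      have h8 : (1 : ℕ) ≡ x.val [MOD M] := (Nat.modEq_iff_dvd' hval1).mpr hdMn
      exact h8.symm
    calc (univ.filter fun x : ZMod (p ^ k) => x ^ p ^ e = 1).card
        ≤ (Finset.range (p ^ e)).card := by
          apply Finset.card_le_card_of_injOn (fun x => x.val / M)
          · intro x hx
            simp only [Finset.mem_coe, mem_filter, mem_univ, true_and] at hx
            rw [Finset.mem_coe, Finset.mem_range]
            apply Nat.div_lt_of_lt_mul
            calc x.val < p ^ k := ZMod.val_lt x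
              _ = M * p ^ e := by rw [hM, ← pow_add]; congr 1; omega
          · intro x hx y hy h
            simp only [coe_filter, Set.mem_setOf_eq, mem_univ, true_and] at hx hy
            have h3 : x.val / M = y.val / M := h
            apply ZMod.val_injective
            have h1 := hkey x hx
            have h2 := hkey y hy
            have e1 := Nat.div_add_mod x.val M
            have e2 := Nat.div_add_mod y.val M
            rw [h3] at e1
            omega
      _ = p ^ e := Finset.card_range _

/-- Splitting the torsion count along coprime exponents. -/
lemma aux_split {N : ℕ} [NeZero N] {r s : ℕ} (h : Nat.Coprime r s) (hr : 1 ≤ r) (hs : 1 < s) :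
    (univ.filter fun x : ZMod N => x ^ (s * r) = 1).card ≤
      (univ.filter fun x : ZMod N => x ^ s = 1).card *
      (univ.filter fun x : ZMod N => x ^ r = 1).card := by
  classical
  rw [← Finset.card_product]
  apply Finset.card_le_card_of_injOn (fun x => (x ^ r, x ^ s))
  · intro x hx
    simp only [Finset.mem_coe, mem_filter, mem_univ, true_and, Finset.mem_product] at hx ⊢
    constructor
    · rw [← pow_mul, mul_comm r s, hx]
    · rw [← pow_mul, hx]
  · intro x hx y hy hxy
    simp only [coe_filter, Set.mem_setOf_eq, mem_univ, true_and] at hx hy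
    dsimp only at hxy
    have h1 : x ^ r = y ^ r := congrArg Prod.fst hxy
    have h2 : x ^ s = y ^ s := congrArg Prod.snd hxy
    obtain ⟨u, -, hu⟩ := Nat.exists_mul_mod_eq_one_of_coprime h hs
    have hdiv := Nat.div_add_mod (r * u) s
    set c := r * u / s with hc
    have hru : r * u = s * c + 1 := by omega
    have hXx : x ^ (r * u) = (x ^ s) ^ c * x := by
      rw [hru, pow_add, pow_mul, pow_one]
    have hXy : y ^ (r * u) = (y ^ s) ^ c * y := by
      rw [hru, pow_add, pow_mul, pow_one]
    have hxyu : x ^ (r * u) = y ^ (r * u) := by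
      rw [pow_mul, pow_mul, h1]
    set X := (x ^ s) ^ c with hX
    have hxc : X = x ^ (s * c) := by rw [hX, ← pow_mul]
    have hXr : X ^ r = 1 := by
      rw [hxc, ← pow_mul, show s * c * r = s * r * c by ring, pow_mul, hx, one_pow]
    have hXunit : X * X ^ (r - 1) = 1 := by
      calc X * X ^ (r - 1) = X ^ (r - 1) * X := mul_comm _ _
        _ = X ^ (r - 1 + 1) := (pow_succ X (r - 1)).symm
        _ = X ^ r := by rw [show r - 1 + 1 = r by omega]
        _ = 1 := hXr
    have key : X * x = X * y := by
      rw [hX]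
      calc (x ^ s) ^ c * x = x ^ (r * u) := hXx.symm
        _ = y ^ (r * u) := hxyu
        _ = (y ^ s) ^ c * y := hXy
        _ = (x ^ s) ^ c * y := by rw [h2]
    calc x = (X ^ (r - 1) * X) * x := by rw [mul_comm (X ^ (r - 1)) X, hXunit, one_mul]
      _ = X ^ (r - 1) * (X * x) := by ring
      _ = X ^ (r - 1) * (X * y) := by rw [key]
      _ = (X ^ (r - 1) * X) * y := by ring
      _ = y := by rw [mul_comm (X ^ (r - 1)) X, hXunit, one_mul]

/-- Translation: solutions of `x^m = -1` are at most solutions of `x^m = 1`. -/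
lemma aux_translate {N m : ℕ} [NeZero N] (hm : 1 ≤ m) :
    (univ.filter fun x : ZMod N => x ^ m = -1).card ≤
      (univ.filter fun x : ZMod N => x ^ m = 1).card := by
  classical
  rcases (univ.filter fun x : ZMod N => x ^ m = -1).eq_empty_or_nonempty with he | ⟨x0, hx0⟩
  · rw [he]; simp
  · simp only [mem_filter, mem_univ, true_and] at hx0
    have hunit : IsUnit x0 := by
      apply IsUnit.of_mul_eq_one (-x0 ^ (m - 1))
      rw [mul_neg, mul_comm, ← pow_succ, show m - 1 + 1 = m by omega, hx0, neg_neg]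
    obtain ⟨u, hu⟩ := hunit
    have hum : u ^ m = -1 := by
      apply Units.ext
      rw [Units.val_pow_eq_pow_val, hu, hx0, Units.val_neg, Units.val_one]
    have hinvm : ((u⁻¹ : (ZMod N)ˣ) : ZMod N) ^ m = -1 := by
      have h1 : (u⁻¹ : (ZMod N)ˣ) ^ m = -1 := by
        rw [inv_pow, hum]
        simp
      rw [← Units.val_pow_eq_pow_val, h1, Units.val_neg, Units.val_one]
    apply Finset.card_le_card_of_injOn (fun x => x * ((u⁻¹ : (ZMod N)ˣ) : ZMod N))
    · intro x hx
      simp only [Finset.mem_coe, mem_filter, mem_univ, true_and] at hx ⊢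
      rw [mul_pow, hx, hinvm, neg_mul_neg, one_mul]
    · intro x _ y _ h
      dsimp only at h
      have h2 := congrArg (fun z => z * ((u : (ZMod N)ˣ) : ZMod N)) h
      simpa [mul_assoc] using h2

/-- Main bound for prime powers. -/
lemma aux_prime_pow_bound {p k m : ℕ} (hp : p.Prime) [NeZero (p ^ k)] (hk : 1 ≤ k)
    (hm : 1 ≤ m) :
    (univ.filter fun x : ZMod (p ^ k) => x ^ m = -1).card ≤ if p = 2 then 2 else m := by
  haveI : NeZero p := ⟨hp.pos.ne'⟩
  by_cases hp2 : p = 2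
  · subst hp2
    rw [if_pos rfl]
    by_cases hmo : 2 ∣ m
    · rcases Nat.lt_or_ge k 2 with hk2 | hk2
      · -- k = 1
        have hk1 : k = 1 := by omega
        subst hk1
        have h1 := Finset.card_filter_le (univ : Finset (ZMod (2 ^ 1)))
          (fun x => x ^ m = -1)
        rwa [Finset.card_univ, ZMod.card] at h1
      · -- k ≥ 2 : no solutions
        have hempty : (univ.filter fun x : ZMod (2 ^ k) => x ^ m = -1) = ∅ := by
          rw [Finset.filter_eq_empty_iff]
          intro x _
          intro hx
          obtain ⟨j, hj⟩ := hmo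
          have hdvd : (4 : ℕ) ∣ 2 ^ k := by
            have h4 : (4 : ℕ) = 2 ^ 2 := by norm_num
            rw [h4]
            exact pow_dvd_pow 2 hk2
          have h4 : ((ZMod.castHom hdvd (ZMod 4)) x ^ j) ^ 2 = -1 := by
            rw [← pow_mul, mul_comm j 2, ← hj, ← map_pow, hx, map_neg, map_one]
          have hno : ∀ y : ZMod 4, y ^ 2 ≠ -1 := by decide
          exact hno _ h4
        rw [hempty]
        simp
    · -- m odd
      calc (univ.filter fun x : ZMod (2 ^ k) => x ^ m = -1).card
          ≤ (univ.filter fun x : ZMod (2 ^ k) => x ^ m = 1).card := aux_translate hm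
        _ ≤ (univ.filter fun y : ZMod 2 => y ^ m = 1).card := aux_torsion_coprime hp hk hmo
        _ ≤ 2 := by
            have h1 := Finset.card_filter_le (univ : Finset (ZMod 2)) (fun y => y ^ m = 1)
            rwa [Finset.card_univ, ZMod.card] at h1
  · rw [if_neg hp2]
    set e := m.factorization p with he
    set r := m / p ^ e with hrdef
    have hm0 : m ≠ 0 := by omega
    have hmr : p ^ e * r = m := Nat.ordProj_mul_ordCompl_eq_self m p
    have hrnd : ¬ p ∣ r := Nat.not_dvd_ordCompl hp hm0
    have hr1 : 1 ≤ r := Nat.ordCompl_pos p hm0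
    have htrans := aux_translate (N := p ^ k) hm
    by_cases he0 : e = 0
    · have hrm : r = m := by
        rw [hrdef, he0, pow_zero, Nat.div_one]
      calc (univ.filter fun x : ZMod (p ^ k) => x ^ m = -1).card
          ≤ (univ.filter fun x : ZMod (p ^ k) => x ^ m = 1).card := htrans
        _ ≤ (univ.filter fun y : ZMod p => y ^ m = 1).card := by
            apply aux_torsion_coprime hp hk
            rw [← hrm]; exact hrnd
        _ ≤ m := aux_field_count hp hm
    · have hpe1 : 1 < p ^ e := Nat.one_lt_pow he0 hp.one_lt
      have hcop : Nat.Coprime r (p ^ e) :=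
        ((hp.coprime_iff_not_dvd.mpr hrnd).symm.pow_right e)
      calc (univ.filter fun x : ZMod (p ^ k) => x ^ m = -1).card
          ≤ (univ.filter fun x : ZMod (p ^ k) => x ^ m = 1).card := htrans
        _ = (univ.filter fun x : ZMod (p ^ k) => x ^ (p ^ e * r) = 1).card := by rw [hmr]
        _ ≤ (univ.filter fun x : ZMod (p ^ k) => x ^ p ^ e = 1).card *
            (univ.filter fun x : ZMod (p ^ k) => x ^ r = 1).card := aux_split hcop hr1 hpe1
        _ ≤ p ^ e * r := by
            apply Nat.mul_le_mul
            · exact aux_ptorsion hp hp2 hk e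
            · calc (univ.filter fun x : ZMod (p ^ k) => x ^ r = 1).card
                  ≤ (univ.filter fun y : ZMod p => y ^ r = 1).card :=
                    aux_torsion_coprime hp hk hrnd
                _ ≤ r := aux_field_count hp hr1
        _ = m := hmr

/-- Final numeric estimate. -/
lemma aux_final_num (s : Finset ℕ) (m : ℕ) (hm : 1 ≤ m) :
    (∏ p ∈ s, if p = 2 then 2 else m) ≤ 2 * m ^ s.card := by
  by_cases h2 : 2 ∈ s
  · rw [← Finset.mul_prod_erase s _ h2, if_pos rfl]
    have heq : (∏ p ∈ s.erase 2, if p = 2 then 2 else m) = m ^ (s.erase 2).card := by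
      rw [Finset.prod_congr rfl (fun p hp => if_neg (Finset.ne_of_mem_erase hp)),
        Finset.prod_const]
    rw [heq, Finset.card_erase_of_mem h2]
    exact Nat.mul_le_mul_left 2 (Nat.pow_le_pow_right hm (Nat.sub_le _ _))
  · rw [Finset.prod_congr rfl (fun p hp => if_neg (by rintro rfl; exact h2 hp)),
      Finset.prod_const]
    exact Nat.le_mul_of_pos_left _ (by norm_num)

end Aux

/-- The number of solutions `x` mod `n` of `x^m ≡ -1 (mod n)` is at most `2·m^ω(n)`. -/
theorem stmt_1 (n m : ℕ) (hn : 1 ≤ n) (hm : 1 ≤ m) :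
    ((Finset.range n).filter (fun x : ℕ => ((x : ZMod n)) ^ m = -1)).card
      ≤ 2 * m ^ n.primeFactors.card := by
  classical
  have hn0 : n ≠ 0 := by omega
  haveI : NeZero n := ⟨hn0⟩
  -- Step 1 : pass to ZMod n
  have h1 : ((Finset.range n).filter (fun x : ℕ => ((x : ZMod n)) ^ m = -1)).card
      = (univ.filter fun x : ZMod n => x ^ m = -1).card := by
    refine Finset.card_bij (fun (x : ℕ) (_ : x ∈ (Finset.range n).filter
        (fun x : ℕ => ((x : ZMod n)) ^ m = -1)) => ((x : ZMod n))) ?_ ?_ ?_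
    · intro a ha
      simp only [mem_filter, Finset.mem_range, mem_univ, true_and] at ha ⊢
      exact ha.2
    · intro a ha b hb h
      simp only [mem_filter, Finset.mem_range] at ha hb
      rw [← ZMod.val_cast_of_lt ha.1, ← ZMod.val_cast_of_lt hb.1, h]
    · intro b hb
      simp only [mem_filter, mem_univ, true_and] at hb
      refine ⟨b.val, ?_, ZMod.natCast_rightInverse b⟩
      simp only [mem_filter, Finset.mem_range]
      refine ⟨ZMod.val_lt b, ?_⟩
      rw [show ((b.val : ℕ) : ZMod n) = b from ZMod.natCast_rightInverse b]
      exact hb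
  rw [h1]
  -- Step 2 : CRT
  set s := n.primeFactors with hs
  haveI inst1 : ∀ p : s, NeZero ((p : ℕ) ^ n.factorization (p : ℕ)) :=
    fun p => ⟨pow_ne_zero _ (Nat.prime_of_mem_primeFactors p.2).pos.ne'⟩
  have hcop : Pairwise (Function.onFun Nat.Coprime fun p : s => (p : ℕ) ^ n.factorization (p : ℕ)) := by
    intro a b hab
    have ha := Nat.prime_of_mem_primeFactors a.2
    have hb := Nat.prime_of_mem_primeFactors b.2
    have hne : (a : ℕ) ≠ (b : ℕ) := fun h => hab (Subtype.ext h)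
    exact Nat.Coprime.pow _ _ ((Nat.coprime_primes ha hb).mpr hne)
  have hprod : ∏ p : s, (p : ℕ) ^ n.factorization (p : ℕ) = n := by
    rw [Finset.prod_coe_sort s (fun p => p ^ n.factorization p)]
    conv_rhs => rw [← Nat.factorization_prod_pow_eq_self hn0]
    rfl
  have e : ZMod n ≃+* ∀ p : s, ZMod ((p : ℕ) ^ n.factorization (p : ℕ)) := by
    have e0 := ZMod.prodEquivPi (fun p : s => (p : ℕ) ^ n.factorization (p : ℕ)) hcop
    rwa [hprod] at e0
  rw [aux_card_filter_ringEquiv e m]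
  have h2 : (univ.filter fun y : (∀ p : s, ZMod ((p : ℕ) ^ n.factorization (p : ℕ))) =>
        y ^ m = -1)
      = Fintype.piFinset (fun p : s =>
          univ.filter fun x : ZMod ((p : ℕ) ^ n.factorization (p : ℕ)) => x ^ m = -1) := by
    ext y
    simp only [mem_filter, mem_univ, true_and, Fintype.mem_piFinset, funext_iff]
    constructor
    · intro h p
      have h3 := h p
      simpa using h3
    · intro h p
      have h3 := h p
      simpa using h3
  rw [h2, Fintype.card_piFinset]
  calc ∏ p : s, (univ.filter fun x : ZMod ((p : ℕ) ^ n.factorization (p : ℕ)) =>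
          x ^ m = -1).card
      ≤ ∏ p : s, (if (p : ℕ) = 2 then 2 else m) := by
        apply Finset.prod_le_prod'
        intro p _
        exact aux_prime_pow_bound (Nat.prime_of_mem_primeFactors p.2)
          ((Nat.prime_of_mem_primeFactors p.2).factorization_pos_of_dvd hn0
            (Nat.dvd_of_mem_primeFactors p.2))
          hm
    _ = ∏ p ∈ s, (if p = 2 then 2 else m) :=
        Finset.prod_coe_sort s (fun p => if p = 2 then 2 else m)
    _ ≤ 2 * m ^ s.card := aux_final_num s m hm
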